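/- arXiv:1410.4275 — 2 statements merged into one kernel-verified Lean document; each statement's English description precedes it below -/
import Mathlib

section
/- Let X ~ N(μ, σ²) be a real Gaussian random variable with σ > 0, and let ω : [-1,1] → ℝ be a bounded symmetric probability density on [-1,1]. Define κ_σ(t; x) = ∫_{[-1,1]} ω(ζ)·exp(t²ζ²σ²/2)·cos(tζx) dζ and ψ(t; μ) = ∫_{[-1,1]} exp(√(-1)·tμζ)·ω(ζ) dζ. Then E[κ_σ(t; X)] = ψ(t; μ) for every t ∈ ℝ. -/
open MeasureTheory ProbabilityTheory Complex Real
open scoped NNReal ENNReal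

lemma gauss_cexp (μ : ℝ) (v : ℝ≥0) (hv : 0 < (v:ℝ)) (a : ℝ) :
    ∫ x : ℝ, (gaussianPDFReal μ v x : ℂ) * Complex.exp (Complex.I * a * x)
      = Complex.exp (Complex.I * a * μ - ((a ^ 2 * (v:ℝ) / 2 : ℝ) : ℂ)) := by
  have hv' : (v:ℂ) ≠ 0 := by exact_mod_cast hv.ne'
  set b : ℂ := -(1 / (2 * v)) with hb
  set c : ℂ := μ / v + Complex.I * a with hc
  set d : ℂ := -(μ:ℂ)^2 / (2 * v) with hd
  have hbre : b.re < 0 := by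
    have h : b = ((-(1 / (2 * (v:ℝ))) : ℝ) : ℂ) := by rw [hb]; push_cast; ring
    rw [h, Complex.ofReal_re]
    exact neg_lt_zero.mpr (by positivity)
  have key : ∀ x : ℝ, (gaussianPDFReal μ v x : ℂ) * Complex.exp (Complex.I * a * x)
      = ((√(2 * π * v))⁻¹ : ℝ) * Complex.exp (b * x ^ 2 + c * x + d) := by
    intro x
    rw [gaussianPDFReal]
    push_cast
    rw [mul_assoc, ← Complex.exp_add]
    congr 2
    field_simp [hb, hc, hd]
    rw [hb, hc, hd]
    field_simp
    ring
  simp_rw [key, integral_const_mul, integral_cexp_quadratic hbre]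
  have h1 : ((π:ℂ) / -b) = ((2 * π * v : ℝ) : ℂ) := by
    rw [hb]; push_cast; field_simp
  have h2 : ((2 * π * v : ℝ) : ℂ) ^ (1/2 : ℂ) = ((√(2 * π * v) : ℝ) : ℂ) := by
    rw [show (1/2 : ℂ) = ((1/2 : ℝ) : ℂ) by norm_num,
      ← Complex.ofReal_cpow (by positivity), Real.sqrt_eq_rpow]
  have h3 : d - c ^ 2 / (4 * b) = Complex.I * a * μ - ((a ^ 2 * (v:ℝ) / 2 : ℝ) : ℂ) := by
    rw [hb, hc, hd]
    have : (Complex.I)^2 = -1 := Complex.I_sq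
    field_simp
    ring_nf
    rw [this]
    push_cast
    ring
  rw [h1, h2, h3, ← mul_assoc, ← Complex.ofReal_mul]
  have : (√(2 * π * v))⁻¹ * √(2 * π * v) = 1 := by
    rw [inv_mul_cancel₀]
    positivity
  rw [this]
  simp

lemma gauss_cexp_integrable (μ : ℝ) (v : ℝ≥0) (hv : 0 < (v:ℝ)) (a : ℝ) :
    Integrable (fun x : ℝ => (gaussianPDFReal μ v x : ℂ) * Complex.exp (Complex.I * a * x)) := by
  have hv' : (v:ℂ) ≠ 0 := by exact_mod_cast hv.ne'
  set b : ℂ := -(1 / (2 * v)) with hb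
  set c : ℂ := μ / v + Complex.I * a with hc
  set d : ℂ := -(μ:ℂ)^2 / (2 * v) with hd
  have hbre : b.re < 0 := by
    have h : b = ((-(1 / (2 * (v:ℝ))) : ℝ) : ℂ) := by rw [hb]; push_cast; ring
    rw [h, Complex.ofReal_re]
    exact neg_lt_zero.mpr (by positivity)
  have key : ∀ x : ℝ, (gaussianPDFReal μ v x : ℂ) * Complex.exp (Complex.I * a * x)
      = ((√(2 * π * v))⁻¹ : ℝ) * Complex.exp (b * x ^ 2 + c * x + d) := by
    intro x
    rw [gaussianPDFReal]
    push_cast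
    rw [mul_assoc, ← Complex.exp_add]
    congr 2
    field_simp [hb, hc, hd]
    rw [hb, hc, hd]
    field_simp
    ring
  simp_rw [key]
  exact (integrable_cexp_quadratic' hbre c d).const_mul _

lemma gauss_cos (μ : ℝ) (v : ℝ≥0) (hv : 0 < (v:ℝ)) (a : ℝ) :
    ∫ x : ℝ, gaussianPDFReal μ v x * Real.cos (a * x)
      = Real.cos (a * μ) * Real.exp (-(a ^ 2 * (v:ℝ) / 2)) := by
  rw [← Complex.ofReal_inj]
  have hcoe : ((∫ x : ℝ, gaussianPDFReal μ v x * Real.cos (a * x) : ℝ) : ℂ)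
      = ∫ x : ℝ, ((gaussianPDFReal μ v x * Real.cos (a * x) : ℝ) : ℂ) :=
    (integral_ofReal (𝕜 := ℂ)).symm
  rw [hcoe]
  push_cast
  have h1 := gauss_cexp μ v hv a
  have h2 := gauss_cexp μ v hv (-a)
  push_cast at h1 h2
  have hi1 := gauss_cexp_integrable μ v hv a
  have hi2 : Integrable (fun x : ℝ => (gaussianPDFReal μ v x : ℂ)
      * Complex.exp (Complex.I * (-(a:ℂ)) * x)) := by
    have := gauss_cexp_integrable μ v hv (-a); push_cast at this; exact this
  have key : ∀ x : ℝ, (gaussianPDFReal μ v x : ℂ) * Complex.cos (a * x)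
      = ((gaussianPDFReal μ v x : ℂ) * Complex.exp (Complex.I * a * x)
        + (gaussianPDFReal μ v x : ℂ) * Complex.exp (Complex.I * (-(a:ℂ)) * x)) / 2 := by
    intro x
    rw [Complex.cos]
    push_cast
    ring_nf
  simp_rw [key]
  rw [integral_div, integral_add hi1 hi2, h1, h2, Complex.cos]
  push_cast
  rw [Complex.exp_sub, Complex.exp_sub, Complex.exp_neg]
  ring_nf

lemma gauss_cos_measure (μ : ℝ) (v : ℝ≥0) (hv : 0 < (v:ℝ)) (a : ℝ) :
    ∫ x, Real.cos (a * x) ∂(gaussianReal μ v)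
      = Real.cos (a * μ) * Real.exp (-(a ^ 2 * (v:ℝ) / 2)) := by
  have hv0 : v ≠ 0 := by
    intro h; rw [h] at hv; simp at hv
  rw [gaussianReal_of_var_ne_zero _ hv0, gaussianPDF_def]
  have hd : (fun x => ENNReal.ofReal (gaussianPDFReal μ v x))
      = fun x => (((gaussianPDFReal μ v x).toNNReal : ℝ≥0) : ℝ≥0∞) := rfl
  rw [hd, integral_withDensity_eq_integral_smul
    ((measurable_gaussianPDFReal μ v).real_toNNReal) _]
  rw [← gauss_cos μ v hv a]
  congr 1
  funext x
  rw [NNReal.smul_def, Real.coe_toNNReal _ (gaussianPDFReal_nonneg μ v x), smul_eq_mul]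

lemma int_bdd {g : ℝ → ℝ} (hg : Measurable g) {C : ℝ}
    (hC : ∀ ζ ∈ Set.Icc (-1:ℝ) 1, |g ζ| ≤ C) :
    IntegrableOn g (Set.Icc (-1:ℝ) 1) := by
  refine Integrable.mono' (integrable_const C) hg.aestronglyMeasurable.restrict ?_
  filter_upwards [ae_restrict_mem measurableSet_Icc] with ζ hζ
  simpa using hC ζ hζ

lemma odd_vanish {g : ℝ → ℝ} (hg : Measurable g) (hodd : ∀ ζ, g (-ζ) = - g ζ) :
    ∫ ζ in Set.Icc (-1:ℝ) 1, g ζ = 0 := by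
  have h1 : ∫ ζ in Set.Icc (-1:ℝ) 1, g ζ
      = ∫ ζ, Set.indicator (Set.Icc (-1:ℝ) 1) g ζ := by
    rw [integral_indicator measurableSet_Icc]
  have h2 : ∀ ζ, Set.indicator (Set.Icc (-1:ℝ) 1) g (-ζ)
      = - Set.indicator (Set.Icc (-1:ℝ) 1) g ζ := by
    intro ζ
    by_cases h : ζ ∈ Set.Icc (-1:ℝ) 1
    · have h' : -ζ ∈ Set.Icc (-1:ℝ) 1 := by
        simp only [Set.mem_Icc] at h ⊢; constructor <;> linarith [h.1, h.2]
      rw [Set.indicator_of_mem h', Set.indicator_of_mem h, hodd]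
    · have h' : -ζ ∉ Set.Icc (-1:ℝ) 1 := by
        simp only [Set.mem_Icc] at h ⊢; intro ⟨ha, hb⟩; exact h ⟨by linarith, by linarith⟩
      rw [Set.indicator_of_notMem h', Set.indicator_of_notMem h, neg_zero]
  have h3 : ∫ ζ, Set.indicator (Set.Icc (-1:ℝ) 1) g ζ
      = - ∫ ζ, Set.indicator (Set.Icc (-1:ℝ) 1) g ζ := by
    conv_lhs => rw [← integral_neg_eq_self]
    simp_rw [h2]
    rw [integral_neg]
  rw [h1]
  linarith [h3]

/-- Let `X ~ N(μ, σ²)` with `σ > 0` and let `ω` be a bounded symmetric probability density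
on `[-1,1]`. With `κ_σ(t; x) = ∫_{[-1,1]} ω(ζ) exp(t²ζ²σ²/2) cos(tζx) dζ` and
`ψ(t; μ) = ∫_{[-1,1]} exp(i t μ ζ) ω(ζ) dζ`, we have `E[κ_σ(t; X)] = ψ(t; μ)` for all `t`. -/
theorem stmt3 (μ σ : ℝ) (hσ : 0 < σ) (w : ℝ → ℝ)
    (hw_meas : Measurable w)
    (hw_bdd : ∃ B : ℝ, ∀ ζ ∈ Set.Icc (-1 : ℝ) 1, |w ζ| ≤ B)
    (hw_symm : ∀ ζ : ℝ, w (-ζ) = w ζ)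
    (hw_nonneg : ∀ ζ : ℝ, 0 ≤ w ζ)
    (hw_int : ∫ ζ in Set.Icc (-1 : ℝ) 1, w ζ = 1) :
    ∀ t : ℝ,
      ((∫ x, (∫ ζ in Set.Icc (-1 : ℝ) 1,
          w ζ * Real.exp (t ^ 2 * ζ ^ 2 * σ ^ 2 / 2) * Real.cos (t * ζ * x))
          ∂(gaussianReal μ ⟨σ ^ 2, sq_nonneg σ⟩)) : ℂ)
        = ∫ ζ in Set.Icc (-1 : ℝ) 1,
            Complex.exp (Complex.I * (t : ℂ) * (μ : ℂ) * (ζ : ℂ)) * (w ζ : ℂ) := by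
  intro t
  obtain ⟨B, hB⟩ := hw_bdd
  have hB0 : 0 ≤ B := le_trans (abs_nonneg (w 0)) (hB 0 (by norm_num))
  set v : ℝ≥0 := ⟨σ ^ 2, sq_nonneg σ⟩ with hvdef
  have hvr : (v : ℝ) = σ ^ 2 := rfl
  have hv : 0 < (v : ℝ) := by rw [hvr]; positivity
  set f : ℝ → ℝ → ℝ := fun x ζ =>
    w ζ * Real.exp (t ^ 2 * ζ ^ 2 * σ ^ 2 / 2) * Real.cos (t * ζ * x) with hf
  have hfin : IsFiniteMeasure (volume.restrict (Set.Icc (-1:ℝ) 1)) := by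
    constructor
    rw [Measure.restrict_apply MeasurableSet.univ]
    simp [Real.volume_Icc]
  have hmeas : Measurable (Function.uncurry f) := by
    apply Measurable.mul
    apply Measurable.mul
    · exact hw_meas.comp measurable_snd
    · fun_prop
    · fun_prop
  have hae : ∀ᵐ p ∂((gaussianReal μ v).prod (volume.restrict (Set.Icc (-1:ℝ) 1))),
      p.2 ∈ Set.Icc (-1:ℝ) 1 := by
    rw [ae_iff]
    have hset : {p : ℝ × ℝ | ¬ p.2 ∈ Set.Icc (-1:ℝ) 1}
        = (Set.univ : Set ℝ) ×ˢ (Set.Icc (-1:ℝ) 1)ᶜ := by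
      ext p; simp
    rw [hset, Measure.prod_prod, Measure.restrict_apply measurableSet_Icc.compl]
    simp
  have hint : Integrable (Function.uncurry f)
      ((gaussianReal μ v).prod (volume.restrict (Set.Icc (-1:ℝ) 1))) := by
    refine Integrable.mono' (integrable_const (B * Real.exp (t ^ 2 * σ ^ 2 / 2)))
      hmeas.aestronglyMeasurable ?_
    filter_upwards [hae] with p hp
    have h1 : |w p.2| ≤ B := hB _ hp
    have hsq : p.2 ^ 2 ≤ 1 := by
      rcases hp with ⟨hl, hr⟩; nlinarith
    have h2 : Real.exp (t ^ 2 * p.2 ^ 2 * σ ^ 2 / 2) ≤ Real.exp (t ^ 2 * σ ^ 2 / 2) := by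
      apply Real.exp_le_exp.mpr
      nlinarith [mul_nonneg (sq_nonneg t) (sq_nonneg σ)]
    have h3 : |Real.cos (t * p.2 * p.1)| ≤ 1 := Real.abs_cos_le_one _
    have hb : |w p.2| * Real.exp (t ^ 2 * p.2 ^ 2 * σ ^ 2 / 2) * |Real.cos (t * p.2 * p.1)|
        ≤ B * Real.exp (t ^ 2 * σ ^ 2 / 2) * 1 :=
      mul_le_mul (mul_le_mul h1 h2 (Real.exp_pos _).le hB0) h3 (abs_nonneg _) (by positivity)
    simpa [Function.uncurry, hf, Real.norm_eq_abs, abs_mul,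
      abs_of_pos (Real.exp_pos _)] using hb
  have hswap := integral_integral_swap (f := f) (μ := gaussianReal μ v)
    (ν := volume.restrict (Set.Icc (-1:ℝ) 1)) hint
  have hinner : ∀ ζ ∈ Set.Icc (-1:ℝ) 1,
      (∫ x, f x ζ ∂(gaussianReal μ v)) = Real.cos (t * μ * ζ) * w ζ := by
    intro ζ _
    simp only [hf]
    rw [integral_const_mul, gauss_cos_measure μ v hv (t * ζ), hvr]
    rw [show (t * ζ) ^ 2 * σ ^ 2 / 2 = t ^ 2 * ζ ^ 2 * σ ^ 2 / 2 by ring,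
      show t * ζ * μ = t * μ * ζ by ring, Real.exp_neg]
    have hexp : Real.exp (t ^ 2 * ζ ^ 2 * σ ^ 2 / 2) ≠ 0 := (Real.exp_pos _).ne'
    field_simp
  have hL : (∫ x, (∫ ζ in Set.Icc (-1:ℝ) 1,
        w ζ * Real.exp (t ^ 2 * ζ ^ 2 * σ ^ 2 / 2) * Real.cos (t * ζ * x))
        ∂(gaussianReal μ v))
      = ∫ ζ in Set.Icc (-1:ℝ) 1, Real.cos (t * μ * ζ) * w ζ := by
    exact hswap.trans (setIntegral_congr_fun measurableSet_Icc hinner)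
  -- RHS
  have hcosint : IntegrableOn (fun ζ => Real.cos (t * μ * ζ) * w ζ) (Set.Icc (-1:ℝ) 1) := by
    refine int_bdd (by fun_prop) (C := B) (fun ζ hζ => ?_)
    rw [abs_mul]
    simpa using mul_le_mul (Real.abs_cos_le_one _) (hB ζ hζ) (abs_nonneg _) zero_le_one
  have hsinint : IntegrableOn (fun ζ => Real.sin (t * μ * ζ) * w ζ) (Set.Icc (-1:ℝ) 1) := by
    refine int_bdd (by fun_prop) (C := B) (fun ζ hζ => ?_)
    rw [abs_mul]
    simpa using mul_le_mul (Real.abs_sin_le_one _) (hB ζ hζ) (abs_nonneg _) zero_le_one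
  have hkey : ∀ ζ : ℝ, Complex.exp (Complex.I * t * μ * ζ) * (w ζ : ℂ)
      = ((Real.cos (t * μ * ζ) * w ζ : ℝ) : ℂ)
        + ((Real.sin (t * μ * ζ) * w ζ : ℝ) : ℂ) * Complex.I := by
    intro ζ
    rw [show (Complex.I * t * μ * ζ : ℂ) = ((t * μ * ζ : ℝ) : ℂ) * Complex.I by
      push_cast; ring, Complex.exp_mul_I]
    push_cast
    ring
  have hzero : ∫ ζ in Set.Icc (-1:ℝ) 1, Real.sin (t * μ * ζ) * w ζ = 0 := by
    refine odd_vanish (by fun_prop) (fun ζ => ?_)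
    rw [show t * μ * -ζ = -(t * μ * ζ) by ring, Real.sin_neg, hw_symm]
    ring
  have hc1 : ∫ ζ in Set.Icc (-1:ℝ) 1, ((Real.cos (t * μ * ζ) * w ζ : ℝ) : ℂ)
      = ((∫ ζ in Set.Icc (-1:ℝ) 1, Real.cos (t * μ * ζ) * w ζ : ℝ) : ℂ) :=
    integral_ofReal (𝕜 := ℂ)
  have hc2 : ∫ ζ in Set.Icc (-1:ℝ) 1, ((Real.sin (t * μ * ζ) * w ζ : ℝ) : ℂ)
      = ((∫ ζ in Set.Icc (-1:ℝ) 1, Real.sin (t * μ * ζ) * w ζ : ℝ) : ℂ) :=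
    integral_ofReal (𝕜 := ℂ)
  have hR : (∫ ζ in Set.Icc (-1:ℝ) 1,
        Complex.exp (Complex.I * (t : ℂ) * (μ : ℂ) * (ζ : ℂ)) * (w ζ : ℂ))
      = ((∫ ζ in Set.Icc (-1:ℝ) 1, Real.cos (t * μ * ζ) * w ζ : ℝ) : ℂ) := by
    have hcosC : IntegrableOn (fun ζ => ((Real.cos (t * μ * ζ) * w ζ : ℝ) : ℂ))
        (Set.Icc (-1:ℝ) 1) := hcosint.ofReal
    have hsinC : IntegrableOn (fun ζ => ((Real.sin (t * μ * ζ) * w ζ : ℝ) : ℂ))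
        (Set.Icc (-1:ℝ) 1) := hsinint.ofReal
    simp_rw [hkey]
    rw [integral_add hcosC (hsinC.mul_const Complex.I),
      integral_mul_const, hc1, hc2, hzero]
    simp
  have hc0 : ∀ x : ℝ, (∫ ζ in Set.Icc (-1:ℝ) 1,
        (w ζ : ℂ) * (Real.exp (t ^ 2 * ζ ^ 2 * σ ^ 2 / 2) : ℂ) * (Real.cos (t * ζ * x) : ℂ))
      = ((∫ ζ in Set.Icc (-1:ℝ) 1,
          w ζ * Real.exp (t ^ 2 * ζ ^ 2 * σ ^ 2 / 2) * Real.cos (t * ζ * x) : ℝ) : ℂ) := by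
    intro x
    have heq : (fun ζ => (w ζ : ℂ) * (Real.exp (t ^ 2 * ζ ^ 2 * σ ^ 2 / 2) : ℂ)
          * (Real.cos (t * ζ * x) : ℂ))
        = fun ζ => ((w ζ * Real.exp (t ^ 2 * ζ ^ 2 * σ ^ 2 / 2) * Real.cos (t * ζ * x) : ℝ) : ℂ) :=
      funext fun ζ => by push_cast; ring
    rw [heq]
    exact integral_ofReal (𝕜 := ℂ)
  simp_rw [hc0]
  have hc0' : (∫ x, ((∫ ζ in Set.Icc (-1:ℝ) 1,
        w ζ * Real.exp (t ^ 2 * ζ ^ 2 * σ ^ 2 / 2) * Real.cos (t * ζ * x) : ℝ) : ℂ)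
        ∂(gaussianReal μ v))
      = ((∫ x, (∫ ζ in Set.Icc (-1:ℝ) 1,
          w ζ * Real.exp (t ^ 2 * ζ ^ 2 * σ ^ 2 / 2) * Real.cos (t * ζ * x))
          ∂(gaussianReal μ v) : ℝ) : ℂ) := integral_ofReal (𝕜 := ℂ)
  rw [hc0', hL, hR]
end

section
/- If X and Y are jointly Gaussian each with variance at most σ₀² and covariance c, then for any real s, |cov[cos(sX), cos(sY)]| ≤ s²·|c|. -/
open MeasureTheory ProbabilityTheory
open NNReal ENNReal

open MeasureTheory ProbabilityTheory NNReal ENNReal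

lemma char_gauss (m : ℝ) (v : ℝ≥0) :
    ∫ x : ℝ, Complex.exp ((x : ℂ) * Complex.I) ∂(gaussianReal m v) =
      Complex.exp ((m : ℂ) * Complex.I - (v : ℝ) / 2) := by
  by_cases hv : v = 0
  · simp [hv, gaussianReal_zero_var]
  · rw [gaussianReal_of_var_ne_zero m hv]
    have hv' : 0 < (v : ℝ) := by positivity
    simp_rw [gaussianPDF_def]
    rw [show (fun x => ENNReal.ofReal (gaussianPDFReal m v x)) =
        (fun x => ((Real.toNNReal (gaussianPDFReal m v x) : ℝ≥0) : ℝ≥0∞)) from rfl]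
    rw [integral_withDensity_eq_integral_smul
      ((measurable_gaussianPDFReal m v).real_toNNReal :
        Measurable fun x => Real.toNNReal (gaussianPDFReal m v x))]
    have hsmul : ∀ x : ℝ, (Real.toNNReal (gaussianPDFReal m v x)) • Complex.exp ((x:ℂ) * Complex.I)
        = ((gaussianPDFReal m v x : ℝ) : ℂ) * Complex.exp ((x:ℂ) * Complex.I) := by
      intro x
      rw [NNReal.smul_def, Real.coe_toNNReal _ (gaussianPDFReal_nonneg m v x)]
      rw [Complex.real_smul]
    simp_rw [hsmul]
    have hvne : (v : ℂ) ≠ 0 := by exact_mod_cast hv'.ne'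
    set b : ℂ := -(1/(2*(v:ℂ))) with hbdef
    have hbre : b.re < 0 := by
      have : b = ((-(1/(2*(v:ℝ))) : ℝ) : ℂ) := by push_cast; ring
      rw [this, Complex.ofReal_re]
      have : 0 < 1/(2*(v:ℝ)) := by positivity
      linarith
    set c : ℂ := (2*(m:ℂ))/(2*(v:ℂ)) + Complex.I with hcdef
    set d : ℂ := -((m:ℂ)^2/(2*(v:ℂ))) with hddef
    have hint : ∀ x : ℝ, ((gaussianPDFReal m v x : ℝ) : ℂ) * Complex.exp ((x:ℂ) * Complex.I)
        = ((Real.sqrt (2*Real.pi*(v:ℝ)))⁻¹ : ℂ) * Complex.exp (b*(x:ℂ)^2 + c*(x:ℂ) + d) := by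
      intro x
      rw [gaussianPDFReal]
      push_cast
      rw [mul_assoc, ← Complex.exp_add]
      congr 2
      ring
    simp_rw [hint]
    rw [integral_const_mul, integral_cexp_quadratic hbre]
    have h1 : ((Real.pi : ℂ) / -b) = ((2*Real.pi*(v:ℝ) : ℝ) : ℂ) := by
      rw [hbdef]; push_cast; field_simp
    have h2 : ((2*Real.pi*(v:ℝ) : ℝ) : ℂ) ^ (1/2 : ℂ) = ((Real.sqrt (2*Real.pi*(v:ℝ)) : ℝ) : ℂ) := by
      rw [show (1/2 : ℂ) = ((1/2 : ℝ) : ℂ) by norm_num]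
      rw [← Complex.ofReal_cpow (by positivity)]
      norm_num [Real.sqrt_eq_rpow]
    have h3 : d - c^2/(4*b) = (m : ℂ) * Complex.I - (v : ℝ) / 2 := by
      rw [hcdef, hbdef, hddef]
      field_simp
      ring_nf
      rw [Complex.I_sq]
      ring
    rw [h1, h2, h3, ← mul_assoc]
    rw [inv_mul_cancel₀ (by exact_mod_cast (by positivity : Real.sqrt (2*Real.pi*(v:ℝ)) ≠ 0) :
        ((Real.sqrt (2*Real.pi*(v:ℝ)) : ℝ) : ℂ) ≠ 0), one_mul]

lemma integrable_cexp_mul_I (μ : Measure ℝ) [IsProbabilityMeasure μ] :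
    Integrable (fun x : ℝ => Complex.exp ((x:ℂ) * Complex.I)) μ := by
  refine (integrable_const (1:ℝ)).mono' ?_ ?_
  · exact (Complex.continuous_exp.comp (by continuity)).aestronglyMeasurable
  · filter_upwards with x
    rw [Complex.norm_exp_ofReal_mul_I]

lemma cos_gauss (m : ℝ) (v : ℝ≥0) :
    ∫ x : ℝ, Real.cos x ∂(gaussianReal m v) = Real.exp (-(v:ℝ)/2) * Real.cos m := by
  have h1 : ∀ x : ℝ, Real.cos x = RCLike.re (Complex.exp ((x:ℂ) * Complex.I)) := by
    intro x; exact (Complex.exp_ofReal_mul_I_re x).symm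
  simp_rw [h1]
  rw [integral_re (integrable_cexp_mul_I _), char_gauss]
  have h2 : (m : ℂ) * Complex.I - ((v:ℝ):ℂ)/2 = ((-(v:ℝ)/2 : ℝ) : ℂ) + (m:ℂ) * Complex.I := by
    push_cast; ring
  rw [h2, Complex.exp_add, ← Complex.ofReal_exp]
  simp only [RCLike.re_to_complex, Complex.re_ofReal_mul, Complex.exp_ofReal_mul_I_re]

lemma cos_center_gauss (m : ℝ) (v : ℝ≥0) :
    ∫ x : ℝ, Real.cos (x - m) ∂(gaussianReal m v) = Real.exp (-(v:ℝ)/2) := by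
  have h1 : ∀ x : ℝ, Real.cos (x - m)
      = RCLike.re (Complex.exp ((x:ℂ) * Complex.I) * Complex.exp (-(m:ℂ) * Complex.I)) := by
    intro x
    rw [← Complex.exp_add, show (x:ℂ) * Complex.I + -(m:ℂ) * Complex.I
      = (((x - m : ℝ)):ℂ) * Complex.I by push_cast; ring]
    exact (Complex.exp_ofReal_mul_I_re _).symm
  simp_rw [h1]
  rw [integral_re ((integrable_cexp_mul_I _).mul_const _), integral_mul_const, char_gauss]
  rw [← Complex.exp_add, show (m : ℂ) * Complex.I - ((v:ℝ):ℂ)/2 + -(m:ℂ) * Complex.I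
    = ((-(v:ℝ)/2 : ℝ) : ℂ) by push_cast; ring, ← Complex.ofReal_exp]
  simp only [RCLike.re_to_complex, Complex.ofReal_re]

lemma abs_exp_sub_one_le' (x : ℝ) : |Real.exp x - 1| ≤ |x| * Real.exp |x| := by
  have hme : Real.exp (-x) * Real.exp x = 1 := by rw [← Real.exp_add]; simp
  rcases le_or_gt 0 x with h | h
  · rw [abs_of_nonneg h,
      abs_of_nonneg (by nlinarith [Real.add_one_le_exp x] : (0:ℝ) ≤ Real.exp x - 1)]
    nlinarith [Real.add_one_le_exp (-x), Real.exp_pos x, hme]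
  · rw [abs_of_neg h, abs_of_nonpos
      (by nlinarith [Real.exp_le_one_iff.mpr h.le] : Real.exp x - 1 ≤ 0)]
    have h1 : 1 - Real.exp x ≤ -x := by nlinarith [Real.add_one_le_exp x]
    have h2 : (1:ℝ) ≤ Real.exp (-x) := by
      rw [show (1:ℝ) = Real.exp 0 by simp]; exact Real.exp_le_exp.mpr (by linarith)
    nlinarith

lemma one_sub_exp_neg_le (y : ℝ) (hy : 0 ≤ y) : 1 - Real.exp (-y) ≤ y := by
  nlinarith [Real.add_one_le_exp (-y)]

lemma le_one_sub_exp_neg (y : ℝ) (hy : 0 ≤ y) : y - y^2 ≤ 1 - Real.exp (-y) := by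
  have h1 : Real.exp (-y) * Real.exp y = 1 := by rw [← Real.exp_add]; simp
  have h2 := Real.add_one_le_exp y
  have h3 : 0 ≤ 1 - y + y^2 := by nlinarith [sq_nonneg (y-1)]
  have h4 : (1:ℝ) ≤ (1 - y + y^2) * (y + 1) := by nlinarith [pow_nonneg hy 3]
  have h5 : (1 - y + y^2) * (y + 1) ≤ (1 - y + y^2) * Real.exp y :=
    mul_le_mul_of_nonneg_left (by linarith) h3
  nlinarith [Real.exp_pos y, h1, h4, h5]

lemma key_var_bound {q α β : ℝ} (hα : 0 ≤ α) (hβ : 0 ≤ β)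
    (h : ∀ t : ℝ, 1 - Real.exp (-(max (t^2*q) 0)/2)
      ≤ 2*(1 - Real.exp (-(t^2*α)/2)) + 2*(1 - Real.exp (-(t^2*β)/2))) :
    q ≤ 2*(α + β) := by
  by_contra hq
  push_neg at hq
  have hqpos : 0 < q := by linarith
  set δ : ℝ := q/2 - (α + β) with hδ

  have hδpos : 0 < δ := by rw [hδ]; linarith
  set x : ℝ := 2*δ/q^2 with hx
  have hxpos : 0 < x := by rw [hx]; positivity
  clear_value δ x
  have ht := h (Real.sqrt x)
  rw [Real.sq_sqrt hxpos.le] at ht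
  rw [max_eq_left (mul_nonneg hxpos.le hqpos.le)] at ht
  have hup1 : 1 - Real.exp (-(x*α)/2) ≤ x*α/2 := by
    have := one_sub_exp_neg_le (x*α/2) (by positivity); rw [show -(x*α/2) = -(x*α)/2 by ring] at this
    linarith
  have hup2 : 1 - Real.exp (-(x*β)/2) ≤ x*β/2 := by
    have := one_sub_exp_neg_le (x*β/2) (by positivity); rw [show -(x*β/2) = -(x*β)/2 by ring] at this
    linarith
  have hlow : x*q/2 - (x*q/2)^2 ≤ 1 - Real.exp (-(x*q)/2) := by
    have := le_one_sub_exp_neg (x*q/2) (by positivity); rw [show -(x*q/2) = -(x*q)/2 by ring] at this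
    linarith
  have hsq : (x*q/2)^2 = x*δ/2 := by
    rw [hx]; field_simp
  have hxab : x*α + x*β = x*q/2 - x*δ := by rw [hδ]; ring
  linarith [ht, hup1, hup2, hlow, hsq, hxab, mul_pos hxpos hδpos]

lemma cos_ineq (u w : ℝ) : 1 - Real.cos (u + w) ≤ 2*(1 - Real.cos u) + 2*(1 - Real.cos w) := by
  rw [Real.cos_add]
  nlinarith [Real.sin_sq_add_cos_sq u, Real.sin_sq_add_cos_sq w,
    sq_nonneg (Real.sin u - Real.sin w), sq_nonneg (Real.cos u + Real.cos w - 2),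
    Real.cos_le_one u, Real.cos_le_one w, Real.neg_one_le_cos u, Real.neg_one_le_cos w]

set_option maxHeartbeats 2000000

/-- If `X` and `Y` are jointly Gaussian, each with variance at most `σ₀²`, and
covariance `c`, then for any real `s`, `|cov[cos(sX), cos(sY)]| ≤ s² |c|`. -/
theorem stmt7 {Ω : Type*} [MeasurableSpace Ω] (P : Measure Ω) [IsProbabilityMeasure P]
    (X Y : Ω → ℝ) (hX : Measurable X) (hY : Measurable Y)
    (μX μY a b c σ₀ : ℝ) (ha : a ^ 2 ≤ σ₀ ^ 2) (hb : b ^ 2 ≤ σ₀ ^ 2)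
    (hgauss : ∀ u v : ℝ,
      Measure.map (fun ω => u * X ω + v * Y ω) P =
        gaussianReal (u * μX + v * μY)
          (Real.toNNReal (u ^ 2 * a ^ 2 + v ^ 2 * b ^ 2 + 2 * u * v * c)))
    (s : ℝ) :
    |(∫ ω, Real.cos (s * X ω) * Real.cos (s * Y ω) ∂P)
        - (∫ ω, Real.cos (s * X ω) ∂P) * (∫ ω, Real.cos (s * Y ω) ∂P)|
      ≤ s ^ 2 * |c| := by
  have hZ : ∀ u v : ℝ, Measurable fun ω => u * X ω + v * Y ω :=
    fun u v => (hX.const_mul u).add (hY.const_mul v)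
  have hcosint : ∀ f : Ω → ℝ, Measurable f → Integrable (fun ω => Real.cos (f ω)) P := by
    intro f hf
    refine (integrable_const (1:ℝ)).mono' (Real.measurable_cos.comp hf).aestronglyMeasurable ?_
    filter_upwards with ω
    rw [Real.norm_eq_abs]
    exact Real.abs_cos_le_one _
  have hmapc : ∀ u v : ℝ, ∫ ω, Real.cos (u * X ω + v * Y ω - (u * μX + v * μY)) ∂P
      = Real.exp (-(max (u^2*a^2 + v^2*b^2 + 2*u*v*c) 0)/2) := by
    intro u v
    have h1 : ∫ ω, Real.cos (u * X ω + v * Y ω - (u * μX + v * μY)) ∂P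
        = ∫ z, Real.cos (z - (u * μX + v * μY))
            ∂(Measure.map (fun ω => u * X ω + v * Y ω) P) :=
      (integral_map (f := fun z => Real.cos (z - (u * μX + v * μY))) (hZ u v).aemeasurable
        (Continuous.aestronglyMeasurable (by continuity))).symm
    rw [h1, hgauss u v, cos_center_gauss, Real.coe_toNNReal']
  have hmap : ∀ u v : ℝ, ∫ ω, Real.cos (u * X ω + v * Y ω) ∂P
      = Real.exp (-(max (u^2*a^2 + v^2*b^2 + 2*u*v*c) 0)/2) * Real.cos (u * μX + v * μY) := by
    intro u v
    have h1 : ∫ ω, Real.cos (u * X ω + v * Y ω) ∂P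
        = ∫ z, Real.cos z ∂(Measure.map (fun ω => u * X ω + v * Y ω) P) :=
      (integral_map (f := fun z => Real.cos z) (hZ u v).aemeasurable
        (Continuous.aestronglyMeasurable (by continuity))).symm
    rw [h1, hgauss u v, cos_gauss, Real.coe_toNNReal']
  -- nonnegativity of the variances of the sum and difference
  have hkey : ∀ ε : ℝ, ε = 1 ∨ ε = -1 → a^2 + b^2 + 2*ε*c ≤ 2*(a^2 + b^2) := by
    intro ε hε
    have hsqε : ∀ r : ℝ, (ε*r)^2 = r^2 := by
      intro r; rcases hε with h | h <;> rw [h] <;> ring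
    refine key_var_bound (sq_nonneg a) (sq_nonneg b) ?_
    intro t
    have iS : Integrable
        (fun ω => 1 - Real.cos (t * X ω + ε*t * Y ω - (t * μX + ε*t * μY))) P := by
      exact (integrable_const 1).sub (hcosint _ ((hZ t (ε*t)).sub_const _))
    have i1 : Integrable (fun ω => 2*(1 - Real.cos (t * X ω - t * μX))) P := by
      exact ((integrable_const 1).sub (hcosint _ ((hX.const_mul t).sub_const _))).const_mul 2
    have i2 : Integrable (fun ω => 2*(1 - Real.cos (ε*t * Y ω - ε*t * μY))) P := by
      exact ((integrable_const 1).sub (hcosint _ ((hY.const_mul (ε*t)).sub_const _))).const_mul 2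
    have hmono := integral_mono (μ := P)
      (f := fun ω => 1 - Real.cos (t * X ω + ε*t * Y ω - (t * μX + ε*t * μY)))
      (g := fun ω => 2*(1 - Real.cos (t * X ω - t * μX))
          + 2*(1 - Real.cos (ε*t * Y ω - ε*t * μY)))
      iS (i1.add i2)
      (by
        intro ω
        have h2 := cos_ineq (t * X ω - t * μX) (ε*t * Y ω - ε*t * μY)
        rw [show (t * X ω - t * μX) + (ε*t * Y ω - ε*t * μY)
          = t * X ω + ε*t * Y ω - (t * μX + ε*t * μY) by ring] at h2
        simpa using h2)
    have eS : ∫ ω, (1 - Real.cos (t * X ω + ε*t * Y ω - (t * μX + ε*t * μY))) ∂P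
        = 1 - Real.exp (-(max (t^2*(a^2 + b^2 + 2*ε*c)) 0)/2) := by
      rw [integral_sub (integrable_const 1) (hcosint _ ((hZ t (ε*t)).sub_const _)),
        integral_const]
      have h0 := hmapc t (ε*t)
      rw [show t^2*a^2 + (ε*t)^2*b^2 + 2*t*(ε*t)*c = t^2*(a^2 + b^2 + 2*ε*c) by
        rcases hε with h | h <;> rw [h] <;> ring] at h0
      rw [h0]
      simp
    have e1 : ∫ ω, Real.cos (t * X ω - t * μX) ∂P = Real.exp (-(t^2*a^2)/2) := by
      have h0 := hmapc t 0
      simp only [zero_mul, mul_zero, add_zero] at h0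
      rw [max_eq_left (by positivity)] at h0
      simpa using h0
    have e2 : ∫ ω, Real.cos (ε*t * Y ω - ε*t * μY) ∂P = Real.exp (-(t^2*b^2)/2) := by
      have h0 := hmapc 0 (ε*t)
      simp only [zero_mul, mul_zero, add_zero, zero_add] at h0
      rw [show (ε*t)^2*b^2 = t^2*b^2 by rw [hsqε]] at h0
      rw [max_eq_left (by positivity)] at h0
      simpa using h0
    have eR : ∫ ω, (2*(1 - Real.cos (t * X ω - t * μX))
          + 2*(1 - Real.cos (ε*t * Y ω - ε*t * μY))) ∂P
        = 2*(1 - Real.exp (-(t^2*a^2)/2)) + 2*(1 - Real.exp (-(t^2*b^2)/2)) := by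
      rw [integral_add i1 i2, integral_const_mul, integral_const_mul,
        integral_sub (integrable_const 1) (hcosint _ ((hX.const_mul t).sub_const _)),
        integral_sub (integrable_const 1) (hcosint _ ((hY.const_mul (ε*t)).sub_const _)),
        integral_const, e1, e2]
      simp
    rw [eS, eR] at hmono
    exact hmono
  have hq1 : 0 ≤ a^2 + b^2 + 2*c := by
    have := hkey (-1) (Or.inr rfl); nlinarith
  have hq2 : 0 ≤ a^2 + b^2 - 2*c := by
    have := hkey 1 (Or.inl rfl); nlinarith
  -- the integrals of interest
  have hc1 : ∫ ω, Real.cos (s * X ω) ∂P = Real.exp (-(s^2*a^2)/2) * Real.cos (s * μX) := by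
    have h0 := hmap s 0
    simp only [zero_mul, mul_zero, add_zero] at h0
    rw [max_eq_left (by positivity)] at h0
    simpa using h0
  have hc2 : ∫ ω, Real.cos (s * Y ω) ∂P = Real.exp (-(s^2*b^2)/2) * Real.cos (s * μY) := by
    have h0 := hmap 0 s
    simp only [zero_mul, mul_zero, add_zero, zero_add] at h0
    rw [max_eq_left (by positivity)] at h0
    simpa using h0
  set A : ℝ := s^2*(a^2+b^2)/2 with hA
  set γ : ℝ := s^2*c with hγ
  have hγeq : |γ| = s^2*|c| := by
    rw [hγ, abs_mul, abs_of_nonneg (sq_nonneg s)]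
  have hγA : |γ| ≤ A := by
    rw [hA, hγ, abs_mul, abs_of_nonneg (sq_nonneg s)]
    rcases abs_cases c with ⟨h1, h2⟩ | ⟨h1, h2⟩ <;> nlinarith [sq_nonneg s]
  have hc3 : ∫ ω, Real.cos (s * X ω + s * Y ω) ∂P
      = Real.exp (-A + -γ) * Real.cos (s * μX + s * μY) := by
    have h0 := hmap s s
    rw [max_eq_left (by nlinarith [sq_nonneg s] : (0:ℝ) ≤ s^2*a^2 + s^2*b^2 + 2*s*s*c)] at h0
    rw [show -(s^2*a^2 + s^2*b^2 + 2*s*s*c)/2 = -A + -γ by rw [hA, hγ]; ring] at h0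
    exact h0
  have hc4 : ∫ ω, Real.cos (s * X ω + (-s) * Y ω) ∂P
      = Real.exp (-A + γ) * Real.cos (s * μX + (-s) * μY) := by
    have h0 := hmap s (-s)
    rw [max_eq_left (by nlinarith [sq_nonneg s] : (0:ℝ) ≤ s^2*a^2 + (-s)^2*b^2 + 2*s*(-s)*c)]
      at h0
    rw [show -(s^2*a^2 + (-s)^2*b^2 + 2*s*(-s)*c)/2 = -A + γ by rw [hA, hγ]; ring] at h0
    exact h0
  have hprod : ∫ ω, Real.cos (s * X ω) * Real.cos (s * Y ω) ∂P
      = ((∫ ω, Real.cos (s * X ω + s * Y ω) ∂P)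
        + (∫ ω, Real.cos (s * X ω + (-s) * Y ω) ∂P)) / 2 := by
    have hpt : ∀ ω, Real.cos (s * X ω) * Real.cos (s * Y ω)
        = (Real.cos (s * X ω + s * Y ω) + Real.cos (s * X ω + (-s) * Y ω)) / 2 := by
      intro ω
      rw [Real.cos_add, show s * X ω + (-s) * Y ω = s * X ω - s * Y ω by ring, Real.cos_sub]
      ring
    simp_rw [hpt]
    rw [integral_div, integral_add (hcosint _ (hZ s s)) (hcosint _ (hZ s (-s)))]
  -- the key exponential estimate
  have hkey2 : ∀ x : ℝ, |x| ≤ A → |Real.exp (-A + x) - Real.exp (-A)| ≤ |x| := by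
    intro x hx
    have h1 : Real.exp (-A + x) - Real.exp (-A) = (Real.exp x - 1) * Real.exp (-A) := by
      rw [sub_mul, one_mul, ← Real.exp_add]; ring_nf
    rw [h1, abs_mul, abs_of_pos (Real.exp_pos _)]
    calc |Real.exp x - 1| * Real.exp (-A)
        ≤ (|x| * Real.exp |x|) * Real.exp (-A) :=
          mul_le_mul_of_nonneg_right (abs_exp_sub_one_le' x) (Real.exp_pos _).le
      _ = |x| * Real.exp (|x| - A) := by rw [mul_assoc, ← Real.exp_add]; ring_nf
      _ ≤ |x| * 1 := by
          refine mul_le_mul_of_nonneg_left ?_ (abs_nonneg x)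
          rw [show (1:ℝ) = Real.exp 0 by simp]
          exact Real.exp_le_exp.mpr (by linarith)
      _ = |x| := mul_one _
  -- final assembly
  rw [hprod, hc1, hc2, hc3, hc4]
  have he : Real.exp (-(s^2*a^2)/2) * Real.exp (-(s^2*b^2)/2) = Real.exp (-A) := by
    rw [← Real.exp_add]; congr 1; rw [hA]; ring
  have hXY : Real.exp (-(s^2*a^2)/2) * Real.cos (s*μX) * (Real.exp (-(s^2*b^2)/2)
        * Real.cos (s*μY))
      = Real.exp (-A) * ((Real.cos (s*μX + s*μY) + Real.cos (s*μX + (-s)*μY))/2) := by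
    rw [Real.cos_add, show s*μX + (-s)*μY = s*μX - s*μY by ring, Real.cos_sub]
    linear_combination (Real.cos (s*μX) * Real.cos (s*μY)) * he
  rw [hXY]
  have hid : (Real.exp (-A + -γ) * Real.cos (s*μX + s*μY)
        + Real.exp (-A + γ) * Real.cos (s*μX + (-s)*μY)) / 2
      - Real.exp (-A) * ((Real.cos (s*μX + s*μY) + Real.cos (s*μX + (-s)*μY))/2)
      = ((Real.exp (-A + -γ) - Real.exp (-A)) * Real.cos (s*μX + s*μY)
        + (Real.exp (-A + γ) - Real.exp (-A)) * Real.cos (s*μX + (-s)*μY)) / 2 := by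
    ring
  rw [hid, abs_div, abs_two]
  have b1 : |(Real.exp (-A + -γ) - Real.exp (-A)) * Real.cos (s*μX + s*μY)| ≤ s^2*|c| := by
    rw [abs_mul, ← hγeq]
    calc |Real.exp (-A + -γ) - Real.exp (-A)| * |Real.cos (s*μX + s*μY)|
        ≤ |-γ| * 1 := mul_le_mul (hkey2 (-γ) (by rwa [abs_neg])) (Real.abs_cos_le_one _)
            (abs_nonneg _) (abs_nonneg _)
      _ = |γ| := by rw [abs_neg, mul_one]
  have b2 : |(Real.exp (-A + γ) - Real.exp (-A)) * Real.cos (s*μX + (-s)*μY)| ≤ s^2*|c| := by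
    rw [abs_mul, ← hγeq]
    calc |Real.exp (-A + γ) - Real.exp (-A)| * |Real.cos (s*μX + (-s)*μY)|
        ≤ |γ| * 1 := mul_le_mul (hkey2 γ hγA) (Real.abs_cos_le_one _)
            (abs_nonneg _) (abs_nonneg _)
      _ = |γ| := mul_one _
  have := abs_add_le ((Real.exp (-A + -γ) - Real.exp (-A)) * Real.cos (s*μX + s*μY))
    ((Real.exp (-A + γ) - Real.exp (-A)) * Real.cos (s*μX + (-s)*μY))
  linarith
end
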